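/- arXiv:2410.21654 — 2 statements merged into one kernel-verified Lean document; each statement's English description precedes it below -/
import Mathlib

section
/- Let A be a quasitriangular bialgebra over a field F, B a right coideal subalgebra of A, (ψ, J, K) a cylindrical structure on (A, B) with tensor K-matrix 𝕂, and let g be an invertible element of A with ε(g) = 1. Then (Ad(g)∘ψ, (g⊗g)·J·Δ(g)⁻¹, g·K) is again a cylindrical structure on (A, B), where Ad(g)(a) = g·a·g⁻¹, and its tensor K-matrix equals (1⊗g)·𝕂. -/
open TensorProduct

noncomputable section

variable (F : Type*) [Field F]

section BialgDefs

variable (A : Type*) [Ring A] [Bialgebra F A]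

/-- Conjugation by an invertible element, as an algebra automorphism. -/
def conjEquiv (g gi : A) (h1 : g * gi = 1) (h2 : gi * g = 1) : A ≃ₐ[F] A where
  toFun a := g * a * gi
  invFun a := gi * a * g
  left_inv a := by simp only [← mul_assoc]; rw [h2, one_mul, mul_assoc, h2, mul_one]
  right_inv a := by simp only [← mul_assoc]; rw [h1, one_mul, mul_assoc, h1, mul_one]
  map_mul' a b := by
    show g * (a * b) * gi = (g * a * gi) * (g * b * gi)
    simp only [mul_assoc]; rw [← mul_assoc gi g, h2, one_mul]
  map_add' a b := by
    show g * (a + b) * gi = g * a * gi + g * b * gi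
    rw [mul_add, add_mul]
  commutes' r := by
    show g * algebraMap F A r * gi = algebraMap F A r
    rw [← Algebra.commutes r g, mul_assoc, h1, mul_one]

/-- The coproduct of `A`, as an algebra map. -/
def cop : A →ₐ[F] A ⊗[F] A := Bialgebra.comulAlgHom F A

/-- The flip of the two tensor legs. -/
def flipT : (A ⊗[F] A) ≃ₐ[F] A ⊗[F] A := Algebra.TensorProduct.comm F A A

/-- The opposite coproduct. -/
def copOp : A →ₐ[F] A ⊗[F] A := (flipT F A).toAlgHom.comp (cop F A)

/-- `X ↦ X₁₂` on triple tensors. -/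
def i12 : (A ⊗[F] A) →ₐ[F] A ⊗[F] (A ⊗[F] A) :=
  Algebra.TensorProduct.map (AlgHom.id F A) Algebra.TensorProduct.includeLeft

/-- `X ↦ X₁₃` on triple tensors. -/
def i13 : (A ⊗[F] A) →ₐ[F] A ⊗[F] (A ⊗[F] A) :=
  Algebra.TensorProduct.map (AlgHom.id F A) Algebra.TensorProduct.includeRight

/-- `X ↦ X₂₃` on triple tensors. -/
def i23 : (A ⊗[F] A) →ₐ[F] A ⊗[F] (A ⊗[F] A) :=
  Algebra.TensorProduct.includeRight

/-- `Δ ⊗ id` landing in `A ⊗ (A ⊗ A)`. -/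
def cop12 : (A ⊗[F] A) →ₐ[F] A ⊗[F] (A ⊗[F] A) :=
  (Algebra.TensorProduct.assoc F F F A A A).toAlgHom.comp
    (Algebra.TensorProduct.map (cop F A) (AlgHom.id F A))

/-- `id ⊗ Δ`. -/
def cop23 : (A ⊗[F] A) →ₐ[F] A ⊗[F] (A ⊗[F] A) :=
  Algebra.TensorProduct.map (AlgHom.id F A) (cop F A)

/-- `ε ⊗ id`. -/
def counit2l : (A ⊗[F] A) →ₐ[F] A :=
  (Algebra.TensorProduct.lid F A).toAlgHom.comp
    (Algebra.TensorProduct.map (Bialgebra.counitAlgHom F A) (AlgHom.id F A))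

/-- `id ⊗ ε`. -/
def counit2r : (A ⊗[F] A) →ₐ[F] A :=
  (Algebra.TensorProduct.rid F F A).toAlgHom.comp
    (Algebra.TensorProduct.map (AlgHom.id F A) (Bialgebra.counitAlgHom F A))

/-- `ψ ⊗ φ` on `A ⊗ A`. -/
def mapT (ψ φ : A →ₐ[F] A) : (A ⊗[F] A) →ₐ[F] A ⊗[F] A := Algebra.TensorProduct.map ψ φ

/-- `R^ψ = (ψ ⊗ id)(R)`. -/
def rpsi (R : A ⊗[F] A) (ψ : A ≃ₐ[F] A) : A ⊗[F] A :=
  Algebra.TensorProduct.map ψ.toAlgHom (AlgHom.id F A) R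

/-- `A` is quasitriangular with R-matrix `R` (with inverse `Ri`). -/
structure IsQT (R Ri : A ⊗[F] A) : Prop where
  mulInv : R * Ri = 1
  invMul : Ri * R = 1
  intw : ∀ a : A, R * cop F A a * Ri = copOp F A a
  copL : cop12 F A R = i13 F A R * i23 F A R
  copR : cop23 F A R = i13 F A R * i12 F A R

/-- `(ψ, J)` is a twist pair (with `Ji` the inverse of `J`). -/
structure IsTwistPair (R Ri J Ji : A ⊗[F] A) (ψ : A ≃ₐ[F] A) : Prop where
  mulInv : J * Ji = 1
  invMul : Ji * J = 1
  cocycle : i12 F A J * cop12 F A J = i23 F A J * cop23 F A J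
  counitL : counit2l F A J = 1
  counitR : counit2r F A J = 1
  intw : ∀ a : A,
    mapT F A ψ.toAlgHom ψ.toAlgHom (copOp F A (ψ.symm a)) = J * cop F A a * Ji
  rrel : flipT F A (mapT F A ψ.toAlgHom ψ.toAlgHom R) = flipT F A J * R * Ji

/-- The image of `s ⊗ A` inside `A ⊗ A`, for a subset `s ⊆ A`. -/
def legSpan (s : Set A) : Submodule F (A ⊗[F] A) :=
  Submodule.span F {x : A ⊗[F] A | ∃ b ∈ s, ∃ a : A, x = b ⊗ₜ[F] a}

/-- `B` is a right coideal subalgebra of `A`. -/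
def IsRightCoideal (B : Subalgebra F A) : Prop :=
  ∀ b ∈ B, cop F A b ∈ legSpan F A (B : Set A)

/-- The tensor K-matrix `𝕂 = (R^ψ)₂₁ ⬝ (1 ⊗ K) ⬝ R`. -/
def tenK (R : A ⊗[F] A) (ψ : A ≃ₐ[F] A) (K : A) : A ⊗[F] A :=
  flipT F A (rpsi F A R ψ) * ((1 : A) ⊗ₜ[F] K) * R

/-- `(ψ, J, K)` is a cylindrical structure on `(A, B)`. -/
structure IsCylindrical (R Ri : A ⊗[F] A) (B : Subalgebra F A) (J Ji : A ⊗[F] A)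
    (ψ : A ≃ₐ[F] A) (K Kinv : A) : Prop where
  twist : IsTwistPair F A R Ri J Ji ψ
  kMulInv : K * Kinv = 1
  kInvMul : Kinv * K = 1
  intwB : ∀ b ∈ B, K * b * Kinv = ψ b
  support : tenK F A R ψ K ∈ legSpan F A (B : Set A)
  copK : cop F A K = Ji * (((1 : A) ⊗ₜ[F] K) * (rpsi F A R ψ * (K ⊗ₜ[F] (1 : A))))

end BialgDefs

section ModuleDefs

variable (A : Type*) [Ring A] [Bialgebra F A]

/-- Right partial transpose on `End V ⊗ End W`. -/
def pt2 (V W : Type*) [AddCommGroup V] [Module F V] [AddCommGroup W] [Module F W] :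
    (Module.End F V ⊗[F] Module.End F W) →ₗ[F]
      (Module.End F V ⊗[F] Module.End F (Module.Dual F W)) :=
  TensorProduct.map LinearMap.id (Module.Dual.transpose (R := F) (M := W) (M' := W))

/-- Identification `End V ⊗ End (W^∨∨) ≃ End V ⊗ End W` via the canonical iso `W ≅ W^∨∨`. -/
def ddIdent (V W : Type*) [AddCommGroup V] [Module F V] [AddCommGroup W] [Module F W]
    [FiniteDimensional F W] :
    (Module.End F V ⊗[F] Module.End F (Module.Dual F (Module.Dual F W))) →ₗ[F]
      (Module.End F V ⊗[F] Module.End F W) :=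
  TensorProduct.map LinearMap.id ((Module.evalEquiv F W).conj.symm).toLinearMap

/-- The right partial trace `A ⊗ End V → A`. -/
def trace2 (V : Type*) [AddCommGroup V] [Module F V] :
    (A ⊗[F] Module.End F V) →ₗ[F] A :=
  (TensorProduct.rid F A).toLinearMap.comp
    (TensorProduct.map LinearMap.id (LinearMap.trace F V))

/-- `T_{•,V}`: act with the second leg on `V`. -/
def actRight (V : Type*) [AddCommGroup V] [Module F V] (ρV : A →ₐ[F] Module.End F V) :
    (A ⊗[F] A) →ₐ[F] A ⊗[F] Module.End F V :=
  Algebra.TensorProduct.map (AlgHom.id F A) ρV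

/-- The boundary transfer matrix `Tr₂(𝕂₍•,V₎)`. -/
def transfer (V : Type*) [AddCommGroup V] [Module F V] (ρV : A →ₐ[F] Module.End F V)
    (T : A ⊗[F] A) : A :=
  trace2 F A V (actRight F A V ρV T)

/-- The module structure on `V ⊗ W` obtained from `Δ`. -/
def tensorRep (V W : Type*) [AddCommGroup V] [Module F V] [AddCommGroup W] [Module F W]
    (ρV : A →ₐ[F] Module.End F V) (ρW : A →ₐ[F] Module.End F W) :
    A →ₐ[F] Module.End F (V ⊗[F] W) :=
  (Module.endTensorEndAlgHom (R := F) (S := F) (A := F) (M := V) (N := W)).comp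
    ((Algebra.TensorProduct.map ρV ρW).comp (cop F A))

/-- `g` (with inverse `gi`) is a boundary gauge transformation for the twist pair `(ψ, J)`. -/
def IsBoundaryGauge (R J : A ⊗[F] A) (ψ : A ≃ₐ[F] A) (g gi : A)
    (hg1 : g * gi = 1) (hg2 : gi * g = 1) : Prop :=
  ∀ (V W : Type) [AddCommGroup V] [Module F V] [FiniteDimensional F V]
    [AddCommGroup W] [Module F W] [FiniteDimensional F W]
    (ρV : A →ₐ[F] Module.End F V) (ρW : A →ₐ[F] Module.End F W),
    let X := pt2 F V W
      ((Algebra.TensorProduct.map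
        (ρV.comp (ψ.trans (conjEquiv F A g gi hg1 hg2)).toAlgHom) ρW) R)
    IsUnit X ∧ IsUnit (pt2 F V (Module.Dual F W) (Ring.inverse X)) ∧
      (Algebra.TensorProduct.map ρV ρW) ((g ⊗ₜ[F] g) * J * cop F A gi) =
        ddIdent F V W (Ring.inverse (pt2 F V (Module.Dual F W) (Ring.inverse X)))

end ModuleDefs

section Helpers
variable {F : Type*} [Field F] {A : Type*} [Ring A] [Bialgebra F A]

lemma assocAlg_eq (w : (A ⊗[F] A) ⊗[F] A) :
    (Algebra.TensorProduct.assoc F F F A A A) w = (TensorProduct.assoc F A A A) w := by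
  induction w using TensorProduct.induction_on with
  | zero => rw [map_zero, LinearEquiv.map_zero]
  | tmul u c =>
    induction u using TensorProduct.induction_on with
    | zero => rw [TensorProduct.zero_tmul]; rw [map_zero, LinearEquiv.map_zero]
    | tmul a b => simp
    | add u v hu hv =>
      rw [TensorProduct.add_tmul]; rw [map_add, hu, hv, LinearEquiv.map_add]
  | add u v hu hv => rw [map_add, hu, hv, LinearEquiv.map_add]

lemma mapR_eq (z : A ⊗[F] A) :
    Algebra.TensorProduct.map (cop F A) (AlgHom.id F A) z
      = LinearMap.rTensor A (Coalgebra.comul (R := F)) z := by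
  induction z using TensorProduct.induction_on with
  | zero => simp only [map_zero]
  | tmul a b => simp [cop]
  | add u v hu hv => simp only [map_add, hu, hv]

lemma mapL_eq (z : A ⊗[F] A) :
    Algebra.TensorProduct.map (AlgHom.id F A) (cop F A) z
      = LinearMap.lTensor A (Coalgebra.comul (R := F)) z := by
  induction z using TensorProduct.induction_on with
  | zero => simp only [map_zero]
  | tmul a b => simp [cop]
  | add u v hu hv => simp only [map_add, hu, hv]

lemma coassoc_pt (x : A) : cop12 F A (cop F A x) = cop23 F A (cop F A x) := by
  have h := LinearMap.congr_fun (Coalgebra.coassoc (R := F) (A := A)) x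
  show (Algebra.TensorProduct.assoc F F F A A A)
      (Algebra.TensorProduct.map (cop F A) (AlgHom.id F A) (cop F A x))
    = Algebra.TensorProduct.map (AlgHom.id F A) (cop F A) (cop F A x)
  rw [mapR_eq, mapL_eq, assocAlg_eq]
  exact h

lemma counit2l_cop (x : A) : counit2l F A (cop F A x) = x := by
  show (Algebra.TensorProduct.lid F A)
      (Algebra.TensorProduct.map (Bialgebra.counitAlgHom F A) (AlgHom.id F A) (cop F A x)) = x
  have : Algebra.TensorProduct.map (Bialgebra.counitAlgHom F A) (AlgHom.id F A) (cop F A x)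
      = LinearMap.rTensor A (Coalgebra.counit (R := F)) (Coalgebra.comul x) := by
    have : ∀ z : A ⊗[F] A, Algebra.TensorProduct.map (Bialgebra.counitAlgHom F A) (AlgHom.id F A) z
        = LinearMap.rTensor A (Coalgebra.counit (R := F)) z := by
      intro z
      induction z using TensorProduct.induction_on with
      | zero => simp only [map_zero]
      | tmul a b => simp
      | add u v hu hv => simp only [map_add, hu, hv]
    exact this _
  rw [this, Coalgebra.rTensor_counit_comul]
  simp

lemma counit2r_cop (x : A) : counit2r F A (cop F A x) = x := by
  show (Algebra.TensorProduct.rid F F A)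
      (Algebra.TensorProduct.map (AlgHom.id F A) (Bialgebra.counitAlgHom F A) (cop F A x)) = x
  have : Algebra.TensorProduct.map (AlgHom.id F A) (Bialgebra.counitAlgHom F A) (cop F A x)
      = LinearMap.lTensor A (Coalgebra.counit (R := F)) (Coalgebra.comul x) := by
    have : ∀ z : A ⊗[F] A, Algebra.TensorProduct.map (AlgHom.id F A) (Bialgebra.counitAlgHom F A) z
        = LinearMap.lTensor A (Coalgebra.counit (R := F)) z := by
      intro z
      induction z using TensorProduct.induction_on with
      | zero => simp only [map_zero]
      | tmul a b => simp
      | add u v hu hv => simp only [map_add, hu, hv]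
    exact this _
  rw [this, Coalgebra.lTensor_counit_comul]
  simp


lemma i12_tmul (x y : A) : i12 F A (x ⊗ₜ[F] y) = x ⊗ₜ[F] (y ⊗ₜ[F] (1:A)) := by
  simp [i12]

lemma cop12_tmul_one (x : A) :
    cop12 F A (x ⊗ₜ[F] (1:A)) = i12 F A (cop F A x) := by
  show (Algebra.TensorProduct.assoc F F F A A A)
      (Algebra.TensorProduct.map (cop F A) (AlgHom.id F A) (x ⊗ₜ[F] (1:A)))
    = i12 F A (cop F A x)
  rw [Algebra.TensorProduct.map_tmul]
  generalize cop F A x = z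
  induction z using TensorProduct.induction_on with
  | zero => rw [TensorProduct.zero_tmul]; rw [map_zero, map_zero]
  | tmul a b => simp [i12]
  | add u v hu hv => rw [TensorProduct.add_tmul]; rw [map_add, map_add, hu, hv]

lemma cop12_one_tmul (y : A) :
    cop12 F A ((1:A) ⊗ₜ[F] y) = (1:A) ⊗ₜ[F] ((1:A) ⊗ₜ[F] y) := by
  show (Algebra.TensorProduct.assoc F F F A A A)
      (Algebra.TensorProduct.map (cop F A) (AlgHom.id F A) ((1:A) ⊗ₜ[F] y))
    = (1:A) ⊗ₜ[F] ((1:A) ⊗ₜ[F] y)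
  rw [Algebra.TensorProduct.map_tmul, map_one, Algebra.TensorProduct.one_def,
    Algebra.TensorProduct.assoc_tmul]
  rfl

lemma cop23_tmul (x y : A) : cop23 F A (x ⊗ₜ[F] y) = x ⊗ₜ[F] (cop F A y) := by
  simp [cop23]

lemma i12_comm (c : A) (z : A ⊗[F] A) :
    i12 F A z * ((1:A) ⊗ₜ[F] ((1:A) ⊗ₜ[F] c))
      = ((1:A) ⊗ₜ[F] ((1:A) ⊗ₜ[F] c)) * i12 F A z := by
  induction z using TensorProduct.induction_on with
  | zero => rw [map_zero, zero_mul, mul_zero]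
  | tmul a b =>
    rw [i12_tmul, Algebra.TensorProduct.tmul_mul_tmul,
      Algebra.TensorProduct.tmul_mul_tmul,
      Algebra.TensorProduct.tmul_mul_tmul, Algebra.TensorProduct.tmul_mul_tmul]
    simp
  | add u v hu hv => rw [map_add, add_mul, mul_add, hu, hv]

lemma conj_mapT (g gi : A) (h1 : g * gi = 1) (h2 : gi * g = 1) (z : A ⊗[F] A) :
    Algebra.TensorProduct.map (conjEquiv F A g gi h1 h2).toAlgHom
      (conjEquiv F A g gi h1 h2).toAlgHom z
      = (g ⊗ₜ[F] g) * z * (gi ⊗ₜ[F] gi) := by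
  induction z using TensorProduct.induction_on with
  | zero => rw [map_zero, mul_zero, zero_mul]
  | tmul a b =>
    rw [Algebra.TensorProduct.map_tmul, Algebra.TensorProduct.tmul_mul_tmul,
      Algebra.TensorProduct.tmul_mul_tmul]
    rfl
  | add u v hu hv => rw [map_add, mul_add, add_mul, hu, hv]

lemma conj_mapL (g gi : A) (h1 : g * gi = 1) (h2 : gi * g = 1) (z : A ⊗[F] A) :
    Algebra.TensorProduct.map (conjEquiv F A g gi h1 h2).toAlgHom (AlgHom.id F A) z
      = (g ⊗ₜ[F] (1:A)) * z * (gi ⊗ₜ[F] (1:A)) := by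
  induction z using TensorProduct.induction_on with
  | zero => rw [map_zero, mul_zero, zero_mul]
  | tmul a b =>
    rw [Algebra.TensorProduct.map_tmul, Algebra.TensorProduct.tmul_mul_tmul,
      Algebra.TensorProduct.tmul_mul_tmul, one_mul, mul_one]
    rfl
  | add u v hu hv => rw [map_add, mul_add, add_mul, hu, hv]

lemma counit2l_tmul (a b : A) :
    counit2l F A (a ⊗ₜ[F] b) = (Bialgebra.counitAlgHom F A a) • b := by
  simp [counit2l]

lemma counit2r_tmul (a b : A) :
    counit2r F A (a ⊗ₜ[F] b) = (Bialgebra.counitAlgHom F A b) • a := by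
  simp [counit2r]

lemma legSpan_one_tmul_mul (s : Set A) (c : A) {x : A ⊗[F] A}
    (hx : x ∈ legSpan F A s) :
    ((1:A) ⊗ₜ[F] c) * x ∈ legSpan F A s := by
  induction hx using Submodule.span_induction with
  | mem y hy =>
    obtain ⟨b, hb, a, rfl⟩ := hy
    rw [Algebra.TensorProduct.tmul_mul_tmul, one_mul]
    exact Submodule.subset_span ⟨b, hb, c * a, rfl⟩
  | zero => rw [mul_zero]; exact zero_mem _
  | add y z _ _ hy hz => rw [mul_add]; exact add_mem hy hz
  | smul r y _ hy => rw [mul_smul_comm]; exact Submodule.smul_mem _ r hy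

end Helpers

/-- gauge transformation of a cylindrical structure by an invertible
element `g` with `ε(g) = 1` is again a cylindrical structure, with tensor K-matrix
`(1 ⊗ g) ⬝ 𝕂`. -/
theorem statement6 {F A : Type*} [Field F] [Ring A] [Bialgebra F A]
    (R Ri : A ⊗[F] A) (hQT : IsQT F A R Ri)
    (B : Subalgebra F A) (hB : IsRightCoideal F A B)
    (J Ji : A ⊗[F] A) (ψ : A ≃ₐ[F] A) (K Kinv : A)
    (hcyl : IsCylindrical F A R Ri B J Ji ψ K Kinv)
    (g gi : A) (hg1 : g * gi = 1) (hg2 : gi * g = 1)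
    (hge : Bialgebra.counitAlgHom F A g = 1) :
    IsCylindrical F A R Ri B ((g ⊗ₜ[F] g) * J * cop F A gi)
      (cop F A g * Ji * (gi ⊗ₜ[F] gi))
      (ψ.trans (conjEquiv F A g gi hg1 hg2)) (g * K) (Kinv * gi) ∧
    tenK F A R (ψ.trans (conjEquiv F A g gi hg1 hg2)) (g * K) =
      ((1 : A) ⊗ₜ[F] g) * tenK F A R ψ K := by
  set e := conjEquiv F A g gi hg1 hg2 with he
  -- basic product facts
  have hcop1 : cop F A gi * cop F A g = 1 := by rw [← map_mul, hg2, map_one]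
  have hcop2 : cop F A g * cop F A gi = 1 := by rw [← map_mul, hg1, map_one]
  have hGGi : (g ⊗ₜ[F] g) * (gi ⊗ₜ[F] gi) = 1 := by
    rw [Algebra.TensorProduct.tmul_mul_tmul, hg1]
    exact Algebra.TensorProduct.one_def.symm
  have hGiG : (gi ⊗ₜ[F] gi) * (g ⊗ₜ[F] g) = 1 := by
    rw [Algebra.TensorProduct.tmul_mul_tmul, hg2]
    exact Algebra.TensorProduct.one_def.symm
  have hεgi : Bialgebra.counitAlgHom F A gi = 1 := by
    have h := map_mul (Bialgebra.counitAlgHom F A) g gi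
    rw [hg1, map_one, hge, one_mul] at h
    exact h.symm
  have hmapT : ∀ z : A ⊗[F] A,
      mapT F A (ψ.trans e).toAlgHom (ψ.trans e).toAlgHom z
        = (g ⊗ₜ[F] g) * mapT F A ψ.toAlgHom ψ.toAlgHom z * (gi ⊗ₜ[F] gi) := by
    intro z
    have h1 : (ψ.trans e).toAlgHom = e.toAlgHom.comp ψ.toAlgHom := rfl
    show Algebra.TensorProduct.map (ψ.trans e).toAlgHom (ψ.trans e).toAlgHom z = _
    rw [h1, Algebra.TensorProduct.map_comp, AlgHom.comp_apply, conj_mapT]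
    rfl
  have hrpsi : rpsi F A R (ψ.trans e)
      = (g ⊗ₜ[F] (1:A)) * rpsi F A R ψ * (gi ⊗ₜ[F] (1:A)) := by
    show Algebra.TensorProduct.map (ψ.trans e).toAlgHom (AlgHom.id F A) R = _
    have h1 : (ψ.trans e).toAlgHom = e.toAlgHom.comp ψ.toAlgHom := rfl
    have h2 : (AlgHom.id F A) = (AlgHom.id F A).comp (AlgHom.id F A) :=
      ((AlgHom.id F A).id_comp).symm
    rw [h1, h2, Algebra.TensorProduct.map_comp, AlgHom.comp_apply, conj_mapL]
    rfl
  have htenK : tenK F A R (ψ.trans e) (g * K)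
      = ((1:A) ⊗ₜ[F] g) * tenK F A R ψ K := by
    rw [tenK, tenK, hrpsi, map_mul, map_mul]
    rw [show flipT F A (g ⊗ₜ[F] (1:A)) = (1:A) ⊗ₜ[F] g from rfl,
        show flipT F A (gi ⊗ₜ[F] (1:A)) = (1:A) ⊗ₜ[F] gi from rfl]
    simp only [mul_assoc]
    rw [← mul_assoc ((1:A) ⊗ₜ[F] gi), Algebra.TensorProduct.tmul_mul_tmul, one_mul,
      ← mul_assoc gi g, hg2, one_mul]
  refine ⟨⟨⟨?_, ?_, ?_, ?_, ?_, ?_, ?_⟩, ?_, ?_, ?_, ?_, ?_⟩, htenK⟩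
  · simp only [mul_assoc]
    rw [← mul_assoc (cop F A gi), hcop1, one_mul, ← mul_assoc J,
      hcyl.twist.mulInv, one_mul, hGGi]
  · simp only [mul_assoc]
    rw [← mul_assoc (gi ⊗ₜ[F] gi), hGiG, one_mul, ← mul_assoc Ji,
      hcyl.twist.invMul, one_mul, hcop2]
  · have hd : (g ⊗ₜ[F] g : A ⊗[F] A) = (g ⊗ₜ[F] (1:A)) * ((1:A) ⊗ₜ[F] g) := by
      rw [Algebra.TensorProduct.tmul_mul_tmul, mul_one, one_mul]
    have hc12g : cop12 F A (g ⊗ₜ[F] g)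
        = i12 F A (cop F A g) * ((1:A) ⊗ₜ[F] ((1:A) ⊗ₜ[F] g)) := by
      rw [hd, map_mul, cop12_tmul_one, cop12_one_tmul]
    have hc23g : cop23 F A (g ⊗ₜ[F] g)
        = (g ⊗ₜ[F] (1 : A ⊗[F] A)) * ((1:A) ⊗ₜ[F] cop F A g) := by
      rw [cop23_tmul, ← one_mul (cop F A g), ← mul_one g,
        ← Algebra.TensorProduct.tmul_mul_tmul]
      rw [mul_one, one_mul]
    simp only [map_mul]
    rw [coassoc_pt, hc12g, hc23g, i12_tmul,
      show i23 F A (g ⊗ₜ[F] g) = (1:A) ⊗ₜ[F] (g ⊗ₜ[F] g) from rfl,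
      show i23 F A J = (1:A) ⊗ₜ[F] J from rfl,
      show i23 F A (cop F A gi) = (1:A) ⊗ₜ[F] (cop F A gi) from rfl]
    simp only [mul_assoc]
    rw [← mul_assoc (i12 F A (cop F A gi)) (i12 F A (cop F A g)), ← map_mul,
      hcop1, map_one, one_mul]
    rw [← mul_assoc (i12 F A J) ((1:A) ⊗ₜ[F] ((1:A) ⊗ₜ[F] g)), i12_comm, mul_assoc]
    rw [← mul_assoc (g ⊗ₜ[F] (g ⊗ₜ[F] (1:A))) ((1:A) ⊗ₜ[F] ((1:A) ⊗ₜ[F] g)),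
      Algebra.TensorProduct.tmul_mul_tmul, Algebra.TensorProduct.tmul_mul_tmul,
      mul_one, one_mul]
    rw [← mul_assoc (i12 F A J) (cop12 F A J), hcyl.twist.cocycle, mul_assoc,
      show i23 F A J = (1:A) ⊗ₜ[F] J from rfl]
    rw [← mul_assoc ((1:A) ⊗ₜ[F] cop F A gi) (g ⊗ₜ[F] (1 : A ⊗[F] A)),
      Algebra.TensorProduct.tmul_mul_tmul, one_mul, mul_one]
    rw [← mul_assoc (g ⊗ₜ[F] cop F A gi) ((1:A) ⊗ₜ[F] cop F A g),
      Algebra.TensorProduct.tmul_mul_tmul, mul_one, hcop1]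
    rw [← mul_assoc ((1:A) ⊗ₜ[F] J) (g ⊗ₜ[F] (1 : A ⊗[F] A)),
      Algebra.TensorProduct.tmul_mul_tmul, one_mul, mul_one]
    rw [← mul_assoc ((1:A) ⊗ₜ[F] (g ⊗ₜ[F] g)) (g ⊗ₜ[F] J),
      Algebra.TensorProduct.tmul_mul_tmul, one_mul]
    rw [← mul_assoc (g ⊗ₜ[F] (g ⊗ₜ[F] g)) ((1:A) ⊗ₜ[F] J),
      Algebra.TensorProduct.tmul_mul_tmul, mul_one]
  · rw [map_mul, map_mul, counit2l_tmul, hge, one_smul, hcyl.twist.counitL,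
      counit2l_cop, mul_one, hg1]
  · rw [map_mul, map_mul, counit2r_tmul, hge, one_smul, hcyl.twist.counitR,
      counit2r_cop, mul_one, hg1]
  · intro a
    rw [hmapT]
    have hsym : (ψ.trans e).symm a = ψ.symm (gi * a * g) := rfl
    rw [hsym, hcyl.twist.intw (gi * a * g), map_mul, map_mul]
    simp only [mul_assoc]
  · have hR : R * cop F A g = flipT F A (cop F A g) * R := by
      have h := hQT.intw g
      have h2 : R * cop F A g * Ri * R = copOp F A g * R := by rw [h]
      rw [mul_assoc (R * cop F A g), hQT.invMul, mul_one] at h2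
      rw [h2]; rfl
    rw [hmapT]
    simp only [map_mul]
    rw [hcyl.twist.rrel,
      show flipT F A (g ⊗ₜ[F] g) = g ⊗ₜ[F] g from rfl,
      show flipT F A (gi ⊗ₜ[F] gi) = gi ⊗ₜ[F] gi from rfl]
    simp only [mul_assoc]
    rw [← mul_assoc R (cop F A g), hR, mul_assoc,
      ← mul_assoc (flipT F A (cop F A gi)), ← map_mul, hcop1, map_one, one_mul]
  · rw [mul_assoc, ← mul_assoc K, hcyl.kMulInv, one_mul, hg1]
  · rw [mul_assoc, ← mul_assoc gi, hg2, one_mul, hcyl.kInvMul]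
  · intro b hb
    show g * K * b * (Kinv * gi) = e (ψ b)
    show g * K * b * (Kinv * gi) = g * ψ b * gi
    rw [← hcyl.intwB b hb]
    simp only [mul_assoc]
  · rw [htenK]
    exact legSpan_one_tmul_mul _ g hcyl.support
  · have hgigK : gi * (g * K) = K := by rw [← mul_assoc, hg2, one_mul]
    rw [map_mul, hcyl.copK, hrpsi]
    simp only [mul_assoc]
    rw [← mul_assoc (gi ⊗ₜ[F] gi) ((1:A) ⊗ₜ[F] (g * K)),
      Algebra.TensorProduct.tmul_mul_tmul, mul_one, hgigK]
    rw [← mul_assoc (gi ⊗ₜ[F] K) (g ⊗ₜ[F] (1:A)),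
      Algebra.TensorProduct.tmul_mul_tmul, hg2, mul_one]
    rw [Algebra.TensorProduct.tmul_mul_tmul, hgigK, one_mul]


end
end

section
/- Let A be a Hopf algebra over a field F with bijective antipode S, quasitriangular with R-matrix R, and let D be a sovereign element of A. Let (ψ, J) be a twist pair for A and g an invertible element of A such that (g⊗g)·J·Δ(g)⁻¹ = (g⊗D)·R^ψ·(g⊗D)⁻¹. Then g is a boundary gauge transformation for (ψ, J). -/
open TensorProduct

noncomputable section

variable (F : Type*) [Field F]

set_option maxHeartbeats 1000000
set_option synthInstance.maxHeartbeats 400000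

section AuxOpp

variable (F : Type*) [Field F]

/-- The tensor product with the second leg viewed in the opposite ring. -/
def opE (C D : Type*) [Ring C] [Ring D] [Algebra F C] [Algebra F D] :
    (C ⊗[F] D) ≃ₗ[F] C ⊗[F] Dᵐᵒᵖ :=
  TensorProduct.congr (LinearEquiv.refl F C) (MulOpposite.opLinearEquiv F)

/-- The "second-leg-opposite" multiplication on `C ⊗ D`. -/
def bt {C D : Type*} [Ring C] [Ring D] [Algebra F C] [Algebra F D]
    (x y : C ⊗[F] D) : C ⊗[F] D :=
  (opE F C D).symm (opE F C D x * opE F C D y)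

variable {C D : Type*} [Ring C] [Ring D] [Algebra F C] [Algebra F D]

lemma opE_tmul (p : C) (q : D) : opE F C D (p ⊗ₜ[F] q) = p ⊗ₜ[F] (MulOpposite.op q) := rfl

lemma opE_symm_tmul (p : C) (q : Dᵐᵒᵖ) :
    (opE F C D).symm (p ⊗ₜ[F] q) = p ⊗ₜ[F] q.unop := rfl

lemma bt_tmul (p r : C) (q s : D) :
    bt F (p ⊗ₜ[F] q) (r ⊗ₜ[F] s) = (p * r) ⊗ₜ[F] (s * q) := by
  simp [bt, opE_tmul, Algebra.TensorProduct.tmul_mul_tmul, ← MulOpposite.op_mul,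
    opE_symm_tmul]

lemma bt_add_left (x x' y : C ⊗[F] D) : bt F (x + x') y = bt F x y + bt F x' y := by
  simp [bt, add_mul]

lemma bt_add_right (x y y' : C ⊗[F] D) : bt F x (y + y') = bt F x y + bt F x y' := by
  simp [bt, mul_add]

lemma bt_zero_left (y : C ⊗[F] D) : bt F (0 : C ⊗[F] D) y = 0 := by simp [bt]

lemma bt_zero_right (x : C ⊗[F] D) : bt F x (0 : C ⊗[F] D) = 0 := by simp [bt]

lemma map_bt {C' D' : Type*} [Ring C'] [Ring D'] [Algebra F C'] [Algebra F D']
    (f : C →ₐ[F] C') (h : D →ₐ[F] D') (x y : C ⊗[F] D) :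
    Algebra.TensorProduct.map f h (bt F x y) =
      bt F (Algebra.TensorProduct.map f h x) (Algebra.TensorProduct.map f h y) := by
  induction x using TensorProduct.induction_on with
  | zero => simp [bt_zero_left]
  | add x₁ x₂ h₁ h₂ => simp only [bt_add_left, map_add, h₁, h₂]
  | tmul p q =>
    induction y using TensorProduct.induction_on with
    | zero => simp [bt_zero_right]
    | add y₁ y₂ h₁ h₂ => simp only [bt_add_right, map_add, h₁, h₂]
    | tmul r s =>
      simp only [bt_tmul, Algebra.TensorProduct.map_tmul, map_mul]

end AuxOpp

section AuxMod

variable (F : Type*) [Field F]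
variable (V W : Type*) [AddCommGroup V] [Module F V] [AddCommGroup W] [Module F W]

lemma pt2_tmul (p : Module.End F V) (q : Module.End F W) :
    pt2 F V W (p ⊗ₜ[F] q) = p ⊗ₜ[F] (Module.Dual.transpose (R := F) q) := rfl

lemma transpose_one : Module.Dual.transpose (R := F) (1 : Module.End F W) = 1 := by
  ext φ w
  simp [Module.Dual.transpose_apply, Module.End.one_eq_id]

lemma transpose_mul (q s : Module.End F W) :
    Module.Dual.transpose (R := F) q * Module.Dual.transpose (R := F) s
      = Module.Dual.transpose (R := F) (s * q) := by
  ext φ w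
  simp [Module.Dual.transpose_apply, Module.End.mul_apply]

lemma pt2_one : pt2 F V W 1 = 1 := by
  rw [Algebra.TensorProduct.one_def, pt2_tmul, transpose_one, ← Algebra.TensorProduct.one_def]

lemma pt2_mul_bt (x y : Module.End F V ⊗[F] Module.End F W) :
    pt2 F V W x * pt2 F V W y = pt2 F V W (bt F x y) := by
  induction x using TensorProduct.induction_on with
  | zero => simp [bt_zero_left]
  | add x₁ x₂ h₁ h₂ => simp only [bt_add_left, map_add, add_mul, h₁, h₂]
  | tmul p q =>
    induction y using TensorProduct.induction_on with
    | zero => simp [bt_zero_right]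
    | add y₁ y₂ h₁ h₂ => simp only [bt_add_right, map_add, mul_add, h₁, h₂]
    | tmul r s =>
      rw [bt_tmul, pt2_tmul, pt2_tmul, pt2_tmul, Algebra.TensorProduct.tmul_mul_tmul,
        transpose_mul]

lemma bt_pt2 (x y : Module.End F V ⊗[F] Module.End F W) :
    bt F (C := Module.End F V) (D := Module.End F (Module.Dual F W))
      (pt2 F V W x) (pt2 F V W y) = pt2 F V W (x * y) := by
  induction x using TensorProduct.induction_on with
  | zero => simp [bt_zero_left]
  | add x₁ x₂ h₁ h₂ => simp only [bt_add_left, map_add, add_mul, h₁, h₂]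
  | tmul p q =>
    induction y using TensorProduct.induction_on with
    | zero => simp [bt_zero_right]
    | add y₁ y₂ h₁ h₂ => simp only [bt_add_right, map_add, mul_add, h₁, h₂]
    | tmul r s =>
      rw [pt2_tmul, pt2_tmul, bt_tmul, Algebra.TensorProduct.tmul_mul_tmul,
        transpose_mul, pt2_tmul]

variable [FiniteDimensional F W]

lemma transpose_transpose_eq (q : Module.End F W) :
    Module.Dual.transpose (R := F) (Module.Dual.transpose (R := F) q) =
      (Module.evalEquiv F W).conj q := by
  apply LinearMap.ext; intro Ψ
  obtain ⟨m, rfl⟩ := (Module.evalEquiv F W).surjective Ψ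
  apply LinearMap.ext; intro φ
  have h1 : (Module.Dual.transpose (R := F)
      (Module.Dual.transpose (R := F) q)) ((Module.evalEquiv F W) m) φ = φ (q m) := by
    simp [Module.Dual.transpose_apply, Module.Dual.eval_apply]
  have h2 : ((Module.evalEquiv F W).conj q) ((Module.evalEquiv F W) m) φ = φ (q m) := by
    rw [LinearEquiv.conj_apply]
    simp only [LinearMap.comp_apply, LinearEquiv.coe_coe]
    rw [LinearEquiv.symm_apply_apply]
    simp [Module.Dual.eval_apply]
  rw [h1, h2]

lemma ddIdent_pt2_pt2 (z : Module.End F V ⊗[F] Module.End F W) :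
    ddIdent F V W (pt2 F V (Module.Dual F W) (pt2 F V W z)) = z := by
  induction z using TensorProduct.induction_on with
  | zero => rw [LinearMap.map_zero, LinearMap.map_zero, LinearMap.map_zero]
  | add z₁ z₂ h₁ h₂ => simp only [map_add, h₁, h₂]
  | tmul p q =>
    rw [pt2_tmul, pt2_tmul]
    show p ⊗ₜ[F] ((Module.evalEquiv F W).conj.symm
      (Module.Dual.transpose (R := F) (Module.Dual.transpose (R := F) q))) = p ⊗ₜ[F] q
    rw [transpose_transpose_eq, LinearEquiv.symm_apply_apply]

end AuxMod

section AuxHopf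

variable (F : Type*) [Field F]
variable {A : Type*} [Ring A] [HopfAlgebra F A]

local notation "Sa" => HopfAlgebra.antipode (R := F) (A := A)

lemma counit2r_tmul_s11 (p q : A) :
    counit2r F A (p ⊗ₜ[F] q) = Coalgebra.counit (R := F) q • p := by
  simp [counit2r, Algebra.TensorProduct.rid_tmul]

lemma counit2r_comul (q : A) : counit2r F A (cop F A q) = q := by
  have h1 : ∀ t : A ⊗[F] A,
      Algebra.TensorProduct.map (AlgHom.id F A) (Bialgebra.counitAlgHom F A) t =
        LinearMap.lTensor A (Coalgebra.counit (R := F) (A := A)) t := by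
    intro t
    induction t using TensorProduct.induction_on with
    | zero => simp
    | add a b ha hb => simp only [map_add, ha, hb]
    | tmul p q => simp
  show (Algebra.TensorProduct.rid F F A) ((Algebra.TensorProduct.map (AlgHom.id F A)
    (Bialgebra.counitAlgHom F A)) (cop F A q)) = q
  rw [h1, cop, Bialgebra.comulAlgHom_apply]
  rw [Coalgebra.lTensor_counit_comul (R := F) q]
  simp [Algebra.TensorProduct.rid_tmul]

lemma Pmap_cop23 (x : A ⊗[F] A) :
    Algebra.TensorProduct.map (AlgHom.id F A) (counit2r F A) (cop23 F A x) = x := by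
  induction x using TensorProduct.induction_on with
  | zero => simp
  | add a b ha hb => simp only [map_add, ha, hb]
  | tmul p q =>
    show Algebra.TensorProduct.map (AlgHom.id F A) (counit2r F A)
      (Algebra.TensorProduct.map (AlgHom.id F A) (cop F A) (p ⊗ₜ[F] q)) = p ⊗ₜ[F] q
    rw [Algebra.TensorProduct.map_tmul, Algebra.TensorProduct.map_tmul]
    simp [counit2r_comul]

lemma Pmap_i13 (x : A ⊗[F] A) :
    Algebra.TensorProduct.map (AlgHom.id F A) (counit2r F A) (i13 F A x) =
      (counit2r F A x) ⊗ₜ[F] (1 : A) := by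
  induction x using TensorProduct.induction_on with
  | zero => simp
  | add a b ha hb => simp only [map_add, ha, hb, TensorProduct.add_tmul]
  | tmul p q =>
    show Algebra.TensorProduct.map (AlgHom.id F A) (counit2r F A)
        (p ⊗ₜ[F] ((1 : A) ⊗ₜ[F] q)) = _
    rw [Algebra.TensorProduct.map_tmul, counit2r_tmul_s11, counit2r_tmul_s11]
    simp [TensorProduct.tmul_smul, TensorProduct.smul_tmul']

lemma Pmap_i12 (x : A ⊗[F] A) :
    Algebra.TensorProduct.map (AlgHom.id F A) (counit2r F A) (i12 F A x) = x := by
  induction x using TensorProduct.induction_on with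
  | zero => simp
  | add a b ha hb => simp only [map_add, ha, hb]
  | tmul p q =>
    show Algebra.TensorProduct.map (AlgHom.id F A) (counit2r F A)
        (p ⊗ₜ[F] (q ⊗ₜ[F] (1 : A))) = p ⊗ₜ[F] q
    rw [Algebra.TensorProduct.map_tmul, counit2r_tmul_s11]
    simp

/-- The map `id ⊗ (m ∘ (S ⊗ id))`. -/
def M1 : (A ⊗[F] (A ⊗[F] A)) →ₗ[F] A ⊗[F] A :=
  LinearMap.lTensor A (LinearMap.mul' F A ∘ₗ LinearMap.rTensor A Sa)

/-- The map `id ⊗ (m ∘ (id ⊗ S))`. -/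
def M2 : (A ⊗[F] (A ⊗[F] A)) →ₗ[F] A ⊗[F] A :=
  LinearMap.lTensor A (LinearMap.mul' F A ∘ₗ LinearMap.lTensor A Sa)

lemma M1_cop23 (x : A ⊗[F] A) :
    M1 F (cop23 F A x) = (counit2r F A x) ⊗ₜ[F] (1 : A) := by
  induction x using TensorProduct.induction_on with
  | zero => simp
  | add a b ha hb => simp only [map_add, ha, hb, TensorProduct.add_tmul]
  | tmul p q =>
    show M1 F (p ⊗ₜ[F] (cop F A q)) = _
    rw [M1, LinearMap.lTensor_tmul, counit2r_tmul_s11]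
    rw [cop, Bialgebra.comulAlgHom_apply]
    simp only [LinearMap.comp_apply]
    rw [HopfAlgebra.mul_antipode_rTensor_comul_apply]
    rw [Algebra.algebraMap_eq_smul_one]
    simp [TensorProduct.tmul_smul, TensorProduct.smul_tmul']

lemma M2_cop23 (x : A ⊗[F] A) :
    M2 F (cop23 F A x) = (counit2r F A x) ⊗ₜ[F] (1 : A) := by
  induction x using TensorProduct.induction_on with
  | zero => simp
  | add a b ha hb => simp only [map_add, ha, hb, TensorProduct.add_tmul]
  | tmul p q =>
    show M2 F (p ⊗ₜ[F] (cop F A q)) = _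
    rw [M2, LinearMap.lTensor_tmul, counit2r_tmul_s11]
    rw [cop, Bialgebra.comulAlgHom_apply]
    simp only [LinearMap.comp_apply]
    rw [HopfAlgebra.mul_antipode_lTensor_comul_apply]
    rw [Algebra.algebraMap_eq_smul_one]
    simp [TensorProduct.tmul_smul, TensorProduct.smul_tmul']

lemma M1_i13_i12 (x y : A ⊗[F] A) :
    M1 F (i13 F A x * i12 F A y) = bt F x (LinearMap.lTensor A Sa y) := by
  induction x using TensorProduct.induction_on with
  | zero => simp [bt_zero_left]
  | add a b ha hb => simp only [map_add, add_mul, ha, hb, bt_add_left]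
  | tmul p q =>
    induction y using TensorProduct.induction_on with
    | zero => simp [bt_zero_right]
    | add a b ha hb => simp only [map_add, mul_add, ha, hb, bt_add_right]
    | tmul r s =>
      show M1 F ((p ⊗ₜ[F] ((1 : A) ⊗ₜ[F] q)) * (r ⊗ₜ[F] (s ⊗ₜ[F] (1 : A)))) = _
      rw [Algebra.TensorProduct.tmul_mul_tmul, Algebra.TensorProduct.tmul_mul_tmul,
        one_mul, mul_one]
      rw [M1, LinearMap.lTensor_tmul, LinearMap.lTensor_tmul, bt_tmul]
      simp [LinearMap.mul'_apply]

lemma M2_i13_i12 (x y : A ⊗[F] A) :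
    M2 F (i13 F A x * i12 F A y) = bt F (LinearMap.lTensor A Sa x) y := by
  induction x using TensorProduct.induction_on with
  | zero => simp [bt_zero_left]
  | add a b ha hb => simp only [map_add, add_mul, ha, hb, bt_add_left]
  | tmul p q =>
    induction y using TensorProduct.induction_on with
    | zero => simp [bt_zero_right]
    | add a b ha hb => simp only [map_add, mul_add, ha, hb, bt_add_right]
    | tmul r s =>
      show M2 F ((p ⊗ₜ[F] ((1 : A) ⊗ₜ[F] q)) * (r ⊗ₜ[F] (s ⊗ₜ[F] (1 : A)))) = _
      rw [Algebra.TensorProduct.tmul_mul_tmul, Algebra.TensorProduct.tmul_mul_tmul,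
        one_mul, mul_one]
      rw [M2, LinearMap.lTensor_tmul, LinearMap.lTensor_tmul, bt_tmul]
      simp [LinearMap.mul'_apply]

lemma M2_i12_i13 (x y : A ⊗[F] A) :
    M2 F (i12 F A x * i13 F A y) = x * LinearMap.lTensor A Sa y := by
  induction x using TensorProduct.induction_on with
  | zero => simp
  | add a b ha hb => simp only [map_add, add_mul, ha, hb]
  | tmul p q =>
    induction y using TensorProduct.induction_on with
    | zero => simp
    | add a b ha hb => simp only [map_add, mul_add, ha, hb]
    | tmul r s =>
      show M2 F ((p ⊗ₜ[F] (q ⊗ₜ[F] (1 : A))) * (r ⊗ₜ[F] ((1 : A) ⊗ₜ[F] s))) = _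
      rw [Algebra.TensorProduct.tmul_mul_tmul, Algebra.TensorProduct.tmul_mul_tmul,
        one_mul, mul_one]
      rw [M2, LinearMap.lTensor_tmul, LinearMap.lTensor_tmul,
        Algebra.TensorProduct.tmul_mul_tmul]
      simp [LinearMap.mul'_apply]

lemma lTensor_conj (D Di : A) (t : A ⊗[F] A) :
    LinearMap.lTensor A ((LinearMap.mulLeft F D) ∘ₗ (LinearMap.mulRight F Di)) t =
      ((1 : A) ⊗ₜ[F] D) * t * ((1 : A) ⊗ₜ[F] Di) := by
  induction t using TensorProduct.induction_on with
  | zero => simp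
  | add a b ha hb => simp only [map_add, ha, hb, add_mul, mul_add]
  | tmul p q =>
    rw [LinearMap.lTensor_tmul, Algebra.TensorProduct.tmul_mul_tmul,
      Algebra.TensorProduct.tmul_mul_tmul]
    simp [LinearMap.mulLeft_apply, LinearMap.mulRight_apply, mul_assoc]

/-- Main algebra-level computation. -/
lemma main_alg (R Ri : A ⊗[F] A) (hQT : IsQT F A R Ri)
    (D Di : A) (hD1 : D * Di = 1) (hD2 : Di * D = 1)
    (hDS : ∀ a : A, D * a * Di = Sa (Sa a)) :
    bt F R (LinearMap.lTensor A Sa R) = 1 ∧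
    bt F (LinearMap.lTensor A Sa R) R = 1 ∧
    LinearMap.lTensor A Sa R = ((1 : A) ⊗ₜ[F] D) * Ri * ((1 : A) ⊗ₜ[F] Di) := by
  -- counit2r R = 1
  have hPone : (Algebra.TensorProduct.map (AlgHom.id F A) (counit2r F A))
      ((1 : A ⊗[F] (A ⊗[F] A))) = 1 := map_one _
  have hcr : counit2r F A R = 1 := by
    have h := congrArg (Algebra.TensorProduct.map (AlgHom.id F A) (counit2r F A)) hQT.copR
    rw [map_mul, Pmap_cop23, Pmap_i13, Pmap_i12] at h
    -- h : R = (counit2r R ⊗ 1) * R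
    have h2 : (1 : A ⊗[F] A) = (counit2r F A R) ⊗ₜ[F] (1 : A) := by
      calc (1 : A ⊗[F] A) = R * Ri := hQT.mulInv.symm
        _ = ((counit2r F A R) ⊗ₜ[F] (1 : A)) * R * Ri := by rw [← h]
        _ = ((counit2r F A R) ⊗ₜ[F] (1 : A)) * (R * Ri) := by rw [mul_assoc]
        _ = _ := by rw [hQT.mulInv, mul_one]
    have h3 := congrArg (counit2r F A) h2
    rw [map_one, counit2r_tmul_s11] at h3
    simpa using h3.symm
  have hcri : counit2r F A Ri = 1 := by
    have h := congrArg (counit2r F A) hQT.mulInv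
    rw [map_mul, map_one, hcr, one_mul] at h
    exact h
  -- cop23 Ri = i12 Ri * i13 Ri
  have hcopRi : cop23 F A Ri = i12 F A Ri * i13 F A Ri := by
    have h2 : cop23 F A Ri * cop23 F A R = 1 := by
      rw [← map_mul, hQT.invMul, map_one]
    have h3 : (i13 F A R * i12 F A R) * (i12 F A Ri * i13 F A Ri) = 1 := by
      rw [mul_assoc (i13 F A R), ← mul_assoc (i12 F A R), ← map_mul, hQT.mulInv,
        map_one, one_mul, ← map_mul, hQT.mulInv, map_one]
    calc cop23 F A Ri
        = cop23 F A Ri * ((i13 F A R * i12 F A R) * (i12 F A Ri * i13 F A Ri)) := by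
          rw [h3, mul_one]
      _ = (cop23 F A Ri * (i13 F A R * i12 F A R)) * (i12 F A Ri * i13 F A Ri) :=
          (mul_assoc _ _ _).symm
      _ = (cop23 F A Ri * cop23 F A R) * (i12 F A Ri * i13 F A Ri) := by rw [hQT.copR]
      _ = i12 F A Ri * i13 F A Ri := by rw [h2, one_mul]
  -- Ri * (id ⊗ S) Ri = 1
  have hfRi : Ri * LinearMap.lTensor A Sa Ri = 1 := by
    have h := congrArg (M2 F) hcopRi
    rw [M2_cop23, M2_i12_i13, hcri] at h
    rw [← h, Algebra.TensorProduct.one_def]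
  -- (id ⊗ S) Ri = R
  have hSRi : LinearMap.lTensor A Sa Ri = R := by
    calc LinearMap.lTensor A Sa Ri
        = (R * Ri) * LinearMap.lTensor A Sa Ri := by rw [hQT.mulInv, one_mul]
      _ = R * (Ri * LinearMap.lTensor A Sa Ri) := by rw [mul_assoc]
      _ = R := by rw [hfRi, mul_one]
  -- u = (1 ⊗ D) Ri (1 ⊗ Di)
  have hu : LinearMap.lTensor A Sa R = ((1 : A) ⊗ₜ[F] D) * Ri * ((1 : A) ⊗ₜ[F] Di) := by
    have hSS : ((LinearMap.mulLeft F D) ∘ₗ (LinearMap.mulRight F Di) : A →ₗ[F] A)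
        = (Sa ∘ₗ Sa : A →ₗ[F] A) := by
      apply LinearMap.ext; intro a
      have h := hDS a
      simp only [LinearMap.comp_apply, LinearMap.mulLeft_apply, LinearMap.mulRight_apply]
      rw [← mul_assoc, h]
    have hcomp : LinearMap.lTensor A Sa R
        = LinearMap.lTensor A ((LinearMap.mulLeft F D) ∘ₗ (LinearMap.mulRight F Di)) Ri := by
      rw [hSS, LinearMap.lTensor_comp, LinearMap.comp_apply, hSRi]
    rw [hcomp, lTensor_conj]
  refine ⟨?_, ?_, hu⟩
  · have h := congrArg (M1 F) hQT.copR
    rw [M1_cop23, M1_i13_i12, hcr] at h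
    rw [← h, Algebra.TensorProduct.one_def]
  · have h := congrArg (M2 F) hQT.copR
    rw [M2_cop23, M2_i13_i12, hcr] at h
    rw [← h, Algebra.TensorProduct.one_def]

end AuxHopf


section AuxMap

variable {F : Type*} [Field F]
variable {A : Type*} [Ring A] [Bialgebra F A]
variable {C D : Type*} [Ring C] [Ring D] [Algebra F C] [Algebra F D]

lemma map_map_algHom (f : A →ₐ[F] C) (h : A →ₐ[F] D) (φ : A →ₐ[F] A) (t : A ⊗[F] A) :
    Algebra.TensorProduct.map f h
        (Algebra.TensorProduct.map φ (AlgHom.id F A) t) =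
      Algebra.TensorProduct.map (f.comp φ) h t := by
  induction t using TensorProduct.induction_on with
  | zero => simp
  | add a b ha hb => simp only [map_add, ha, hb]
  | tmul p q => simp

lemma map_conj (χ χ' : A →ₐ[F] C) (ρ2 : A →ₐ[F] D) (gc gic : C)
    (hχ : ∀ a, χ a = gc * χ' a * gic) (t : A ⊗[F] A) :
    Algebra.TensorProduct.map χ ρ2 t =
      (gc ⊗ₜ[F] (1 : D)) * Algebra.TensorProduct.map χ' ρ2 t * (gic ⊗ₜ[F] (1 : D)) := by
  induction t using TensorProduct.induction_on with
  | zero => simp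
  | add a b ha hb => simp only [map_add, ha, hb, mul_add, add_mul]
  | tmul p q =>
    rw [Algebra.TensorProduct.map_tmul, Algebra.TensorProduct.map_tmul, hχ p,
      Algebra.TensorProduct.tmul_mul_tmul, Algebra.TensorProduct.tmul_mul_tmul,
      one_mul, mul_one]

end AuxMap

/-- if `(g ⊗ g) ⬝ J ⬝ Δ(g)⁻¹ = (g ⊗ D) ⬝ R^ψ ⬝ (g ⊗ D)⁻¹` then `g` is a
boundary gauge transformation for `(ψ, J)`. -/
theorem statement11 {F A : Type*} [Field F] [Ring A] [HopfAlgebra F A]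
    (hS : Function.Bijective (HopfAlgebra.antipode (R := F) (A := A)))
    (R Ri : A ⊗[F] A) (hQT : IsQT F A R Ri)
    (D Di : A) (hD1 : D * Di = 1) (hD2 : Di * D = 1)
    (hDgl : cop F A D = D ⊗ₜ[F] D) (hDe : Bialgebra.counitAlgHom F A D = 1)
    (hDS : ∀ a : A, D * a * Di =
      HopfAlgebra.antipode (R := F) (HopfAlgebra.antipode (R := F) a))
    (J Ji : A ⊗[F] A) (ψ : A ≃ₐ[F] A) (hTP : IsTwistPair F A R Ri J Ji ψ)
    (g gi : A) (hg1 : g * gi = 1) (hg2 : gi * g = 1)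
    (hrel : (g ⊗ₜ[F] g) * J * cop F A gi =
      (g ⊗ₜ[F] D) * rpsi F A R ψ * (gi ⊗ₜ[F] Di)) :
    IsBoundaryGauge F A R J ψ g gi hg1 hg2 := by
  intro V W _ _ _ _ _ _ ρV ρW
  intro X
  obtain ⟨hbt1, hbt2, huDef⟩ := main_alg F R Ri hQT D Di hD1 hD2 hDS
  set Sa := HopfAlgebra.antipode (R := F) (A := A) with hSa
  set u : A ⊗[F] A := LinearMap.lTensor A Sa R with hu
  set v : A ⊗[F] A := ((1 : A) ⊗ₜ[F] D) * R * ((1 : A) ⊗ₜ[F] Di) with hv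
  have hDiD : ((1 : A) ⊗ₜ[F] Di) * ((1 : A) ⊗ₜ[F] D) = 1 := by
    rw [Algebra.TensorProduct.tmul_mul_tmul, one_mul, hD2,
      ← Algebra.TensorProduct.one_def]
  have hDDi : ((1 : A) ⊗ₜ[F] D) * ((1 : A) ⊗ₜ[F] Di) = 1 := by
    rw [Algebra.TensorProduct.tmul_mul_tmul, one_mul, hD1,
      ← Algebra.TensorProduct.one_def]
  have key : ∀ P Q : A ⊗[F] A,
      (((1 : A) ⊗ₜ[F] D) * P * ((1 : A) ⊗ₜ[F] Di)) *
        (((1 : A) ⊗ₜ[F] D) * Q * ((1 : A) ⊗ₜ[F] Di)) =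
      ((1 : A) ⊗ₜ[F] D) * (P * Q) * ((1 : A) ⊗ₜ[F] Di) := by
    intro P Q
    simp only [mul_assoc]
    rw [← mul_assoc ((1 : A) ⊗ₜ[F] Di) ((1 : A) ⊗ₜ[F] D), hDiD, one_mul]
  have huv : u * v = 1 := by
    rw [huDef, hv, key Ri R, hQT.invMul, mul_one, hDDi]
  have hvu : v * u = 1 := by
    rw [huDef, hv, key R Ri, hQT.mulInv, mul_one, hDDi]
  set πh := Algebra.TensorProduct.map
    (ρV.comp (ψ.trans (conjEquiv F A g gi hg1 hg2)).toAlgHom) ρW with hπ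
  have hXr : pt2 F V W (πh R) * pt2 F V W (πh u) = 1 := by
    rw [pt2_mul_bt, ← map_bt, hbt1, map_one, pt2_one]
  have hXl : pt2 F V W (πh u) * pt2 F V W (πh R) = 1 := by
    rw [pt2_mul_bt, ← map_bt, hbt2, map_one, pt2_one]
  let UX : (Module.End F V ⊗[F] Module.End F (Module.Dual F W))ˣ :=
    ⟨pt2 F V W (πh R), pt2 F V W (πh u), hXr, hXl⟩
  have hXunit : IsUnit X := ⟨UX, rfl⟩
  have hRinvX : Ring.inverse X = pt2 F V W (πh u) := Ring.inverse_unit UX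
  have hYr : pt2 F V (Module.Dual F W) (pt2 F V W (πh u)) *
      pt2 F V (Module.Dual F W) (pt2 F V W (πh v)) = 1 := by
    rw [pt2_mul_bt, bt_pt2, ← map_mul, huv, map_one, pt2_one, pt2_one]
  have hYl : pt2 F V (Module.Dual F W) (pt2 F V W (πh v)) *
      pt2 F V (Module.Dual F W) (pt2 F V W (πh u)) = 1 := by
    rw [pt2_mul_bt, bt_pt2, ← map_mul, hvu, map_one, pt2_one, pt2_one]
  let UY : (Module.End F V ⊗[F] Module.End F (Module.Dual F (Module.Dual F W)))ˣ :=
    ⟨pt2 F V (Module.Dual F W) (pt2 F V W (πh u)),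
      pt2 F V (Module.Dual F W) (pt2 F V W (πh v)), hYr, hYl⟩
  have hYunit : IsUnit (pt2 F V (Module.Dual F W) (Ring.inverse X)) := by
    rw [hRinvX]; exact ⟨UY, rfl⟩
  have hRinvY : Ring.inverse (pt2 F V (Module.Dual F W) (Ring.inverse X)) =
      pt2 F V (Module.Dual F W) (pt2 F V W (πh v)) := by
    rw [hRinvX]; exact Ring.inverse_unit UY
  refine ⟨hXunit, hYunit, ?_⟩
  rw [hRinvY, ddIdent_pt2_pt2, hrel]
  -- now a purely multiplicative computation
  have hπR : πh R = ((ρV g) ⊗ₜ[F] (1 : Module.End F W)) *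
      Algebra.TensorProduct.map (ρV.comp ψ.toAlgHom) ρW R *
      ((ρV gi) ⊗ₜ[F] (1 : Module.End F W)) := by
    rw [hπ]
    refine map_conj _ _ _ _ _ (fun a => ?_) R
    show ρV ((ψ.trans (conjEquiv F A g gi hg1 hg2)) a) = _
    rw [AlgEquiv.trans_apply]
    show ρV (g * ψ a * gi) = _
    rw [map_mul, map_mul]
    rfl
  have hrpsi : Algebra.TensorProduct.map ρV ρW (rpsi F A R ψ) =
      Algebra.TensorProduct.map (ρV.comp ψ.toAlgHom) ρW R :=
    map_map_algHom ρV ρW ψ.toAlgHom R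
  rw [map_mul, map_mul, hrpsi]
  rw [hv, map_mul, map_mul, hπR]
  rw [Algebra.TensorProduct.map_tmul, Algebra.TensorProduct.map_tmul,
    Algebra.TensorProduct.map_tmul, Algebra.TensorProduct.map_tmul]
  simp only [map_one]
  rw [show (ρV g) ⊗ₜ[F] (ρW D) =
    ((1 : Module.End F V) ⊗ₜ[F] (ρW D)) * ((ρV g) ⊗ₜ[F] (1 : Module.End F W)) by
      rw [Algebra.TensorProduct.tmul_mul_tmul, one_mul, mul_one]]
  rw [show (ρV gi) ⊗ₜ[F] (ρW Di) =
    ((ρV gi) ⊗ₜ[F] (1 : Module.End F W)) * ((1 : Module.End F V) ⊗ₜ[F] (ρW Di)) by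
      rw [Algebra.TensorProduct.tmul_mul_tmul, one_mul, mul_one]]
  simp only [mul_assoc]

end
end
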